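/- (n = 2 case, Lee–Ioannopoulos) Let A_1, A_2 be complex m×m matrices and B_1, B_2, C_0, C_1 invertible complex m×m matrices, and for z ≠ 0 let M(z) be the 2m×2m matrix [[A_1, B_1 + z⁻¹C_0],[C_1 + zB_2, A_2]]. Then for every complex λ and every nonzero complex z, det(λI_{2m} - M(z)) = (-z)^{-m} · det(T(λ) - zI_{2m}) · det(B_1 B_2), where T(λ) = [[-B_2⁻¹(A_2 - λI_m), -B_2⁻¹C_1],[I_m, 0]] · [[-B_1⁻¹(A_1 - λI_m), -B_1⁻¹C_0],[I_m, 0]]. -/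

import Mathlib

open Matrix

lemma det_swap_blocks (m : ℕ) :
    (fromBlocks 0 1 1 0 : Matrix (Fin m ⊕ Fin m) (Fin m ⊕ Fin m) ℂ).det = (-1) ^ m := by
  have h : (fromBlocks 0 1 1 0 : Matrix (Fin m ⊕ Fin m) (Fin m ⊕ Fin m) ℂ) =
      fromBlocks (-1) 0 0 1 *
        (fromBlocks 1 (-1) 0 1 * (fromBlocks 1 0 1 1 * fromBlocks 1 (-1) 0 1)) := by
    simp [fromBlocks_multiply, Matrix.fromBlocks_inj]
  rw [h]
  simp [det_mul, det_fromBlocks_zero₂₁, det_fromBlocks_zero₁₂, Matrix.det_neg]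

/-- The `n = 2` case of the duality relation (Lee–Ioannopoulos): for
`M(z) = [[A_1, B_1 + z⁻¹ C_0], [C_1 + z B_2, A_2]]` and
`T(λ) = [[-B_2⁻¹(A_2 - λ I_m), -B_2⁻¹ C_1], [I_m, 0]] · [[-B_1⁻¹(A_1 - λ I_m), -B_1⁻¹ C_0], [I_m, 0]]`,
one has `det (λ I_{2m} - M(z)) = (-z)^{-m} · det (T(λ) - z I_{2m}) · det (B_1 B_2)`. -/
theorem duality_relation_n2 (m : ℕ) (hm : 1 ≤ m)
    (A₁ A₂ B₁ B₂ C₀ C₁ : Matrix (Fin m) (Fin m) ℂ)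
    (hB₁ : IsUnit B₁) (hB₂ : IsUnit B₂) (hC₀ : IsUnit C₀) (hC₁ : IsUnit C₁)
    (lam : ℂ) (z : ℂ) (hz : z ≠ 0) :
    (lam • (1 : Matrix ((Fin m) ⊕ (Fin m)) ((Fin m) ⊕ (Fin m)) ℂ) -
        Matrix.fromBlocks A₁ (B₁ + z⁻¹ • C₀) (C₁ + z • B₂) A₂).det =
      (-z) ^ (-(m : ℤ)) *
        ((Matrix.fromBlocks (-B₂⁻¹ * (A₂ - lam • (1 : Matrix (Fin m) (Fin m) ℂ)))
              (-B₂⁻¹ * C₁) 1 0 *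
            Matrix.fromBlocks (-B₁⁻¹ * (A₁ - lam • (1 : Matrix (Fin m) (Fin m) ℂ)))
              (-B₁⁻¹ * C₀) 1 0 -
            z • (1 : Matrix ((Fin m) ⊕ (Fin m)) ((Fin m) ⊕ (Fin m)) ℂ)).det) *
        (B₁ * B₂).det := by
  have hdB₁ : IsUnit B₁.det := (isUnit_iff_isUnit_det _).mp hB₁
  have hdB₂ : IsUnit B₂.det := (isUnit_iff_isUnit_det _).mp hB₂
  have h1 : B₁⁻¹ * B₁ = 1 := nonsing_inv_mul _ hdB₁
  have h2 : B₂⁻¹ * B₂ = 1 := nonsing_inv_mul _ hdB₂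
  have key :
      Matrix.fromBlocks (-B₂⁻¹ * (A₂ - lam • (1 : Matrix (Fin m) (Fin m) ℂ)))
              (-B₂⁻¹ * C₁) 1 0 *
          Matrix.fromBlocks (-B₁⁻¹ * (A₁ - lam • (1 : Matrix (Fin m) (Fin m) ℂ)))
              (-B₁⁻¹ * C₀) 1 0 -
          z • (1 : Matrix ((Fin m) ⊕ (Fin m)) ((Fin m) ⊕ (Fin m)) ℂ) =
        fromBlocks B₂⁻¹ 0 0 B₁⁻¹ * fromBlocks 0 1 1 0 *
          fromBlocks 1 0 (-((A₂ - lam • (1 : Matrix (Fin m) (Fin m) ℂ)) * B₁⁻¹)) 1 *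
          (lam • (1 : Matrix ((Fin m) ⊕ (Fin m)) ((Fin m) ⊕ (Fin m)) ℂ) -
            Matrix.fromBlocks A₁ (B₁ + z⁻¹ • C₀) (C₁ + z • B₂) A₂) *
          fromBlocks 1 0 0 (z • (1 : Matrix (Fin m) (Fin m) ℂ)) := by
    rw [show (1 : Matrix ((Fin m) ⊕ (Fin m)) ((Fin m) ⊕ (Fin m)) ℂ) =
        fromBlocks 1 0 0 1 from fromBlocks_one.symm]
    rw [fromBlocks_smul, fromBlocks_smul]
    simp only [fromBlocks_multiply, sub_eq_add_neg, fromBlocks_neg, fromBlocks_add,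
      Matrix.fromBlocks_inj, smul_zero, neg_zero, add_zero]
    have hzz : z * (z⁻¹ * lam) = lam := by field_simp
    refine ⟨?_, ?_, ?_, ?_⟩ <;>
      simp only [Matrix.mul_one, Matrix.one_mul, Matrix.mul_zero, Matrix.zero_mul, add_zero,
        zero_add, Matrix.neg_mul, Matrix.mul_neg, neg_neg, neg_add_rev, Matrix.smul_mul,
        Matrix.mul_smul, smul_neg, neg_zero]
    all_goals
      simp only [Matrix.mul_add, Matrix.add_mul, Matrix.mul_neg, Matrix.neg_mul, Matrix.mul_smul,
        Matrix.smul_mul, h1, h2, smul_smul, mul_inv_cancel₀ hz, one_smul, smul_neg, neg_neg,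
        Matrix.mul_one, smul_add]
    all_goals try simp only [mul_assoc, h1, h2, Matrix.mul_one, Matrix.one_mul, hzz, smul_smul]
    all_goals abel
  rw [key]
  rw [det_mul, det_mul, det_mul, det_mul, det_fromBlocks_zero₂₁, det_fromBlocks_zero₁₂,
    det_fromBlocks_zero₂₁, det_swap_blocks, det_one, det_smul, det_one,
    det_nonsing_inv, det_nonsing_inv, det_mul]
  have hzm : (-z) ^ (-(m : ℤ)) = ((-1 : ℂ) ^ m * z ^ m)⁻¹ := by
    rw [_root_.zpow_neg, zpow_natCast, neg_pow]
  rw [hzm]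
  simp only [Ring.inverse_eq_inv']
  simp only [Fintype.card_sum, Fintype.card_fin]
  have hz1 : (z : ℂ) ^ m ≠ 0 := pow_ne_zero _ hz
  have hn1 : ((-1 : ℂ)) ^ m ≠ 0 := pow_ne_zero _ (by norm_num)
  field_simp
  rw [eq_div_iff (mul_ne_zero hdB₂.ne_zero hdB₁.ne_zero)]
  ring
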